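/- (Permutation equivariance of a multi-layer GCN.) Let S be an N×N real matrix, P the permutation matrix of a permutation π of {1,…,N}, and Ŝ = Pᵀ S P. For each layer l = 1,…,L let H_l(S) = Σ_{k=0}^{K} h_{l,k} S^k be a graph filter with real coefficients h_{l,k}, and let σ : ℝ → ℝ be applied entrywise (denoted σ̃). Define Φ(S, x) as the composition z⁰ = x, z^{l+1} = σ̃(H_{l+1}(S) z^l), Φ(S,x) = z^L. Then for every x ∈ ℝ^N, Φ(Ŝ, Pᵀ x) = Pᵀ Φ(S, x). -/

import Mathlib

/-- The output of an `L`-layer GCN with shift operator `S`, filter coefficients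
`h l k` (layer `l`, tap `k`, each filter being `H_l(S) = Σ_{k=0}^{K} h l k • S^k`),
and entrywise nonlinearity `σ`, via the recursion `z⁰ = x`,
`z^{l+1} = σ̃(H_{l+1}(S) z^l)`. -/
def gcnOutput {N : ℕ} (K : ℕ) (σ : ℝ → ℝ) (S : Matrix (Fin N) (Fin N) ℝ)
    (h : ℕ → ℕ → ℝ) : ℕ → (Fin N → ℝ) → (Fin N → ℝ)
  | 0, x => x
  | l + 1, x => fun i =>
      σ (((∑ k ∈ Finset.range (K + 1), h (l + 1) k • S ^ k).mulVec
            (gcnOutput K σ S h l x)) i)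

lemma permMatrix_mulVec {N : ℕ} (π : Equiv.Perm (Fin N)) (v : Fin N → ℝ) :
    (π.permMatrix ℝ).mulVec v = fun i => v (π i) := by
  funext i
  simp [Matrix.mulVec, dotProduct, Equiv.Perm.permMatrix,
    PEquiv.toMatrix_apply, Equiv.toPEquiv_apply]

lemma permMatrix_transpose {N : ℕ} (π : Equiv.Perm (Fin N)) :
    (π.permMatrix ℝ).transpose = (π⁻¹).permMatrix ℝ := by
  rw [Equiv.Perm.permMatrix, ← PEquiv.toMatrix_symm, ← Equiv.toPEquiv_symm]
  rfl

lemma permMatrix_mul_transpose {N : ℕ} (π : Equiv.Perm (Fin N)) :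
    π.permMatrix ℝ * (π.permMatrix ℝ).transpose = 1 := by
  ext i j
  simp [Matrix.mul_apply, Matrix.transpose_apply, PEquiv.toMatrix_apply,
    Equiv.toPEquiv_apply, Matrix.one_apply, Finset.sum_ite_eq, π.injective.eq_iff]
  rw [Finset.sum_eq_single (π i)]
  · simp
  · intro b _ hb; simp [Ne.symm hb]
  · simp

lemma permMatrix_transpose_mul {N : ℕ} (π : Equiv.Perm (Fin N)) :
    (π.permMatrix ℝ).transpose * π.permMatrix ℝ = 1 := by
  rw [permMatrix_transpose]
  have := permMatrix_mul_transpose π⁻¹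
  rwa [permMatrix_transpose, inv_inv] at this

lemma permConj_pow {N : ℕ} (π : Equiv.Perm (Fin N)) (S : Matrix (Fin N) (Fin N) ℝ) (k : ℕ) :
    ((π.permMatrix ℝ).transpose * S * π.permMatrix ℝ) ^ k
      = (π.permMatrix ℝ).transpose * S ^ k * π.permMatrix ℝ := by
  induction k with
  | zero =>
      simp only [pow_zero, Matrix.mul_one]
      exact (permMatrix_transpose_mul π).symm
  | succ k ih =>
      rw [pow_succ, pow_succ, ih]
      have h1 : π.permMatrix ℝ * (π.permMatrix ℝ).transpose = 1 := permMatrix_mul_transpose π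
      calc (π.permMatrix ℝ).transpose * S ^ k * π.permMatrix ℝ *
            ((π.permMatrix ℝ).transpose * S * π.permMatrix ℝ)
          = (π.permMatrix ℝ).transpose * S ^ k *
              (π.permMatrix ℝ * (π.permMatrix ℝ).transpose) * S * π.permMatrix ℝ := by
            simp only [Matrix.mul_assoc]
        _ = (π.permMatrix ℝ).transpose * (S ^ k * S) * π.permMatrix ℝ := by
            rw [h1, Matrix.mul_one]; simp only [Matrix.mul_assoc]

/-- **Permutation equivariance of a multi-layer GCN.**
With P the permutation matrix of π and Ŝ = Pᵀ S P, the L-layer GCN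
Φ(S, x) satisfies Φ(Ŝ, Pᵀ x) = Pᵀ Φ(S, x). -/
theorem gcn_permutation_equivariant {N K L : ℕ}
    (S : Matrix (Fin N) (Fin N) ℝ) (π : Equiv.Perm (Fin N))
    (h : ℕ → ℕ → ℝ) (σ : ℝ → ℝ) (x : Fin N → ℝ) :
    gcnOutput K σ ((π.permMatrix ℝ).transpose * S * π.permMatrix ℝ) h L
        ((π.permMatrix ℝ).transpose.mulVec x) =
      (π.permMatrix ℝ).transpose.mulVec (gcnOutput K σ S h L x) := by
  induction L with
  | zero => rfl
  | succ L ih =>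
      have hfilter : ∀ l : ℕ,
          (∑ k ∈ Finset.range (K + 1),
              h l k • ((π.permMatrix ℝ).transpose * S * π.permMatrix ℝ) ^ k)
            = (π.permMatrix ℝ).transpose *
                (∑ k ∈ Finset.range (K + 1), h l k • S ^ k) * π.permMatrix ℝ := by
        intro l
        rw [Matrix.mul_sum, Finset.sum_mul]
        refine Finset.sum_congr rfl fun k _ => ?_
        rw [permConj_pow, Matrix.mul_smul, Matrix.smul_mul]
      simp only [gcnOutput]
      rw [ih, hfilter, permMatrix_transpose, ← Matrix.mulVec_mulVec, ← Matrix.mulVec_mulVec]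
      funext i
      simp only [permMatrix_mulVec]
      simp [permMatrix_mulVec]
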